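/- Let X ∈ ℝ^{m×n}, Y ∈ ℝ^{n×n}, E ∈ ℝ^{n×n} and s > 0 satisfy YᵀY = XᵀX + s·I + E with ‖E‖₂ ≤ 0.1·s. Then Y is invertible and σ_min(X·Y⁻¹) ≥ 0.9·σ_min(X)/√(σ_min(X)² + s). -/

import Mathlib

open Matrix Finset

noncomputable def specNorm {m n : ℕ} (A : Matrix (Fin m) (Fin n) ℝ) : ℝ :=
  ‖(Matrix.toEuclideanLin A).toContinuousLinearMap‖

noncomputable def frobNorm {m n : ℕ} (A : Matrix (Fin m) (Fin n) ℝ) : ℝ :=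
  Real.sqrt (∑ i, ∑ j, (A i j) ^ 2)

noncomputable def gNorm {m n : ℕ} (A : Matrix (Fin m) (Fin n) ℝ) : ℝ :=
  ⨆ j : Fin n, Real.sqrt (∑ i, (A i j) ^ 2)

noncomputable def sigmaMin {m n : ℕ} (A : Matrix (Fin m) (Fin n) ℝ) : ℝ :=
  ⨅ x : Metric.sphere (0 : EuclideanSpace ℝ (Fin n)) 1,
    ‖(Matrix.toEuclideanLin A) (x : EuclideanSpace ℝ (Fin n))‖

noncomputable def condNum {m n : ℕ} (A : Matrix (Fin m) (Fin n) ℝ) : ℝ :=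
  specNorm A / sigmaMin A

def IsT1Sparse {m n : ℕ} (X : Matrix (Fin m) (Fin n) ℝ) (v t₁ t₂ : ℕ) (c : ℝ) : Prop :=
  ∃ S : Finset (Fin n), S.card = v ∧
    (∀ j ∈ S, Set.ncard {i | X i j ≠ 0} ≤ t₁) ∧
    (∀ j ∉ S, Set.ncard {i | X i j ≠ 0} ≤ t₂) ∧
    ∀ i j, |X i j| ≤ c

open scoped RealInnerProductSpace

lemma euclid_comp {l m n : ℕ} (A : Matrix (Fin l) (Fin m) ℝ) (B : Matrix (Fin m) (Fin n) ℝ)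
    (v : EuclideanSpace ℝ (Fin n)) :
    Matrix.toEuclideanLin (A * B) v = Matrix.toEuclideanLin A (Matrix.toEuclideanLin B v) := by
  simp [Matrix.toEuclideanLin_apply, Matrix.mulVec_mulVec]

lemma euclid_one {n : ℕ} (v : EuclideanSpace ℝ (Fin n)) :
    Matrix.toEuclideanLin (1 : Matrix (Fin n) (Fin n) ℝ) v = v := by
  simp [Matrix.toEuclideanLin_apply]

lemma inner_gram {m n : ℕ} (A : Matrix (Fin m) (Fin n) ℝ) (v : EuclideanSpace ℝ (Fin n)) :
    ⟪Matrix.toEuclideanLin (Aᵀ * A) v, v⟫ = ‖Matrix.toEuclideanLin A v‖ ^ 2 := by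
  rw [euclid_comp, ← Matrix.conjTranspose_eq_transpose_of_trivial,
    Matrix.toEuclideanLin_conjTranspose_eq_adjoint, LinearMap.adjoint_inner_left,
    real_inner_self_eq_norm_sq]

lemma specNorm_bound {m n : ℕ} (A : Matrix (Fin m) (Fin n) ℝ) (v : EuclideanSpace ℝ (Fin n)) :
    ‖Matrix.toEuclideanLin A v‖ ≤ specNorm A * ‖v‖ := by
  have := (Matrix.toEuclideanLin A).toContinuousLinearMap.le_opNorm v
  simpa [specNorm] using this

lemma sigmaMin_nonneg {m n : ℕ} (A : Matrix (Fin m) (Fin n) ℝ) : 0 ≤ sigmaMin A :=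
  Real.iInf_nonneg fun _ => norm_nonneg _

lemma sigmaMin_le {m n : ℕ} (A : Matrix (Fin m) (Fin n) ℝ)
    (x : Metric.sphere (0 : EuclideanSpace ℝ (Fin n)) 1) :
    sigmaMin A ≤ ‖Matrix.toEuclideanLin A (x : EuclideanSpace ℝ (Fin n))‖ :=
  ciInf_le ⟨0, by rintro y ⟨z, rfl⟩; exact norm_nonneg _⟩ x

lemma sigmaMin_mul_norm_le {m n : ℕ} (A : Matrix (Fin m) (Fin n) ℝ)
    (w : EuclideanSpace ℝ (Fin n)) :
    sigmaMin A * ‖w‖ ≤ ‖Matrix.toEuclideanLin A w‖ := by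
  rcases eq_or_ne w 0 with rfl | hw
  · simp
  · have hnw : 0 < ‖w‖ := norm_pos_iff.2 hw
    have hx : (‖w‖⁻¹ • w) ∈ Metric.sphere (0 : EuclideanSpace ℝ (Fin n)) 1 := by
      simp [norm_smul, abs_of_pos (inv_pos.2 hnw), inv_mul_cancel₀ hnw.ne']
    have h := sigmaMin_le A ⟨_, hx⟩
    simp only [_root_.map_smul, norm_smul, norm_inv, norm_norm] at h
    have h2 : sigmaMin A * ‖w‖ ≤ (‖w‖⁻¹ * ‖Matrix.toEuclideanLin A w‖) * ‖w‖ :=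
      mul_le_mul_of_nonneg_right h hnw.le
    rwa [mul_comm (‖w‖⁻¹) _, mul_assoc, inv_mul_cancel₀ hnw.ne', mul_one] at h2

lemma endgame_arith (a t sg q s e : ℝ) (hs : 0 < s) (hσ : 0 ≤ sg) (ha : 0 ≤ a)
    (ht : 0 ≤ t) (hq0 : 0 < q) (hq2 : q ^ 2 = sg ^ 2 + s)
    (hkey : 1 = a ^ 2 + s * t ^ 2 + e) (he : e ≤ 0.1 * s * t ^ 2)
    (hat : sg * t ≤ a) : 0.9 * sg ≤ a * q := by
  by_cases hc : 0.9 ≤ t * q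
  · nlinarith [mul_le_mul_of_nonneg_right hat hq0.le, mul_le_mul_of_nonneg_right hc hσ]
  · push_neg at hc
    have h1 : (t * q) ^ 2 ≤ 0.81 := by nlinarith [mul_nonneg ht hq0.le]
    have h2 : 1 - 1.1 * s * t ^ 2 ≤ a ^ 2 := by linarith
    have h3 : (0.9 * sg) ^ 2 ≤ (a * q) ^ 2 := by
      nlinarith [mul_le_mul_of_nonneg_right h2 (sq_nonneg q),
        mul_le_mul_of_nonneg_left h1 hs.le, sq_nonneg sg]
    have haq : 0 ≤ a * q := mul_nonneg ha hq0.le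
    have h4 : 0 ≤ 0.9 * sg := by linarith
    calc 0.9 * sg = Real.sqrt ((0.9 * sg) ^ 2) := (Real.sqrt_sq h4).symm
      _ ≤ Real.sqrt ((a * q) ^ 2) := Real.sqrt_le_sqrt h3
      _ = a * q := Real.sqrt_sq haq

/-- Y is invertible and σ_min(X·Y⁻¹) ≥ 0.9·σ_min(X)/√(σ_min(X)² + s). -/
theorem stmt11 {m n : ℕ} (X : Matrix (Fin m) (Fin n) ℝ) (Y E : Matrix (Fin n) (Fin n) ℝ)
    (s : ℝ) (hs : 0 < s)
    (hGram : Yᵀ * Y = Xᵀ * X + s • (1 : Matrix (Fin n) (Fin n) ℝ) + E)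
    (hE : specNorm E ≤ 0.1 * s) :
    IsUnit Y ∧
    0.9 * sigmaMin X / Real.sqrt (sigmaMin X ^ 2 + s) ≤ sigmaMin (X * Y⁻¹) := by
  have key : ∀ v : EuclideanSpace ℝ (Fin n),
      ‖Matrix.toEuclideanLin Y v‖ ^ 2 =
        ‖Matrix.toEuclideanLin X v‖ ^ 2 + s * ‖v‖ ^ 2
          + ⟪Matrix.toEuclideanLin E v, v⟫ := by
    intro v
    have h1 : ⟪Matrix.toEuclideanLin (Yᵀ * Y) v, v⟫ = ‖Matrix.toEuclideanLin Y v‖ ^ 2 :=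
      inner_gram Y v
    rw [hGram] at h1
    simp only [map_add, _root_.map_smul, LinearMap.add_apply, LinearMap.smul_apply,
      inner_add_left, real_inner_smul_left, inner_gram, euclid_one,
      real_inner_self_eq_norm_sq] at h1
    linarith
  have eb : ∀ v : EuclideanSpace ℝ (Fin n),
      |⟪Matrix.toEuclideanLin E v, v⟫| ≤ 0.1 * s * ‖v‖ ^ 2 := by
    intro v
    have h1 := abs_real_inner_le_norm (Matrix.toEuclideanLin E v) v
    have h2 := specNorm_bound E v
    have h3 := norm_nonneg v
    nlinarith [norm_nonneg (Matrix.toEuclideanLin E v), sq_nonneg ‖v‖]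
  have hYlow : ∀ v : EuclideanSpace ℝ (Fin n),
      0.9 * s * ‖v‖ ^ 2 ≤ ‖Matrix.toEuclideanLin Y v‖ ^ 2 := by
    intro v
    have h1 := key v
    have h2 := abs_le.1 (eb v)
    nlinarith [sq_nonneg ‖Matrix.toEuclideanLin X v‖]
  have hdet : Y.det ≠ 0 := by
    intro h0
    obtain ⟨v, hv0, hv⟩ := (Matrix.exists_mulVec_eq_zero_iff).2 h0
    set w : EuclideanSpace ℝ (Fin n) := (WithLp.equiv 2 _).symm v with hwdef
    have hw : Matrix.toEuclideanLin Y w = 0 := by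
      rw [hwdef, WithLp.equiv_symm_apply, Matrix.toEuclideanLin_apply_piLp_toLp, hv]
      rfl
    have hwn : 0 < ‖w‖ := by
      rw [norm_pos_iff]
      intro h
      apply hv0
      have := congrArg (WithLp.equiv 2 (Fin n → ℝ)) (hwdef ▸ h)
      simpa using this
    have := hYlow w
    rw [hw] at this
    norm_num at this
    nlinarith [mul_pos (mul_pos (by norm_num : (0:ℝ) < 0.9) hs) (pow_pos hwn 2)]
  have hY : IsUnit Y := (Matrix.isUnit_iff_isUnit_det Y).2 (isUnit_iff_ne_zero.2 hdet)
  refine ⟨hY, ?_⟩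
  rcases Nat.eq_zero_or_pos n with rfl | hn
  · haveI : IsEmpty (Metric.sphere (0 : EuclideanSpace ℝ (Fin 0)) 1) := by
      constructor
      rintro ⟨x, hx⟩
      have hx0 : x = 0 := Subsingleton.elim _ _
      rw [Metric.mem_sphere, hx0] at hx
      simp at hx
    have h1 : sigmaMin X = 0 := Real.iInf_of_isEmpty _
    have h2 : sigmaMin (X * Y⁻¹) = 0 := Real.iInf_of_isEmpty _
    rw [h1, h2]
    norm_num
  · haveI : Nonempty (Metric.sphere (0 : EuclideanSpace ℝ (Fin n)) 1) := by
      refine ⟨⟨EuclideanSpace.single ⟨0, hn⟩ (1 : ℝ), ?_⟩⟩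
      simp [EuclideanSpace.norm_single]
    have main : ∀ u : Metric.sphere (0 : EuclideanSpace ℝ (Fin n)) 1,
        0.9 * sigmaMin X / Real.sqrt (sigmaMin X ^ 2 + s) ≤
          ‖Matrix.toEuclideanLin (X * Y⁻¹) (u : EuclideanSpace ℝ (Fin n))‖ := by
      rintro ⟨u, hu⟩
      show 0.9 * sigmaMin X / Real.sqrt (sigmaMin X ^ 2 + s) ≤
        ‖Matrix.toEuclideanLin (X * Y⁻¹) u‖
      have hu1 : ‖u‖ = 1 := by simpa using hu
      set w := Matrix.toEuclideanLin Y⁻¹ u with hwdef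
      have hYw : Matrix.toEuclideanLin Y w = u := by
        rw [hwdef, ← euclid_comp, Matrix.mul_nonsing_inv _ (isUnit_iff_ne_zero.2 hdet),
          euclid_one]
      have hXY : Matrix.toEuclideanLin (X * Y⁻¹) u = Matrix.toEuclideanLin X w :=
        euclid_comp X Y⁻¹ u
      have hkey := key w
      rw [hYw, hu1, one_pow] at hkey
      have heb := (abs_le.1 (eb w)).2
      have hat : sigmaMin X * ‖w‖ ≤ ‖Matrix.toEuclideanLin X w‖ := sigmaMin_mul_norm_le X w
      have hq0 : 0 < Real.sqrt (sigmaMin X ^ 2 + s) :=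
        Real.sqrt_pos.2 (by positivity)
      have hq2 : Real.sqrt (sigmaMin X ^ 2 + s) ^ 2 = sigmaMin X ^ 2 + s :=
        Real.sq_sqrt (by positivity)
      rw [hXY, div_le_iff₀ hq0]
      exact endgame_arith _ _ _ _ _ _ hs (sigmaMin_nonneg X) (norm_nonneg _)
        (norm_nonneg _) hq0 hq2 hkey heb hat
    exact le_ciInf main
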